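/- Suppose zer(A+B+C) ≠ ∅, let z̄ ∈ zer(A+B+C), and let γ_min > 0 satisfy γ_k ≥ γ_min for every k ∈ ℕ. Then for every positive integer K with K ≥ (1/ε²) · ((1 + √α_max)² / (γ_min² (1 − α_max))) · ‖x₀ − z̄‖², there exists k ∈ {0, …, K−1} such that ‖u_k‖ ≤ ε, where the sequences are generated by the AFBF algorithm with Stepsize Choice 2. -/

import Mathlib

open scoped RealInnerProductSpace Pointwise
open Filter Topology

lemma sq_le_of_nonneg {A B : ℝ} (hA : 0 ≤ A) (hB : 0 ≤ B) (h : A ^ 2 ≤ B ^ 2) : A ≤ B :=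
  (pow_le_pow_iff_left₀ hA hB two_ne_zero).mp h

/-- `‖P - E‖² = ‖X‖² - ‖X - P‖² + ‖E‖² - 2⟪(X-P)+E, P⟫`. -/
lemma afbf_inner_aux {H : Type*} [NormedAddCommGroup H] [InnerProductSpace ℝ H] (X P E : H) :
    ‖P - E‖ ^ 2 = ‖X‖ ^ 2 - ‖X - P‖ ^ 2 + ‖E‖ ^ 2 - 2 * ⟪(X - P) + E, P⟫ := by
  simp only [norm_sub_sq_real, inner_add_left, inner_sub_left, real_inner_self_eq_norm_sq]
  rw [real_inner_comm P E]
  ring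

/-- rpow upshift: `g² s^e ≤ dd^(e-2) g^e s²` when `0<s≤g·dd`, `2≤e`. -/
lemma afbf_upshift {s g dd e : ℝ} (hs : 0 < s) (hg : 0 < g) (hdd : 0 < dd)
    (hle : s ≤ g * dd) (he : 2 ≤ e) :
    g ^ 2 * s ^ e ≤ dd ^ (e - 2) * g ^ e * s ^ 2 := by
  have h1 : s ^ e = s ^ (e - 2) * s ^ 2 := by
    rw [← Real.rpow_natCast s 2, ← Real.rpow_add hs]; norm_num
  have h2 : s ^ (e - 2) ≤ g ^ (e - 2) * dd ^ (e - 2) := by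
    rw [← Real.mul_rpow hg.le hdd.le]
    exact Real.rpow_le_rpow hs.le hle (by linarith)
  have h3 : g ^ 2 * g ^ (e - 2) = g ^ e := by
    rw [← Real.rpow_natCast g 2, ← Real.rpow_add hg]; norm_num
  calc g ^ 2 * s ^ e = g ^ 2 * s ^ (e - 2) * s ^ 2 := by rw [h1]; ring
    _ ≤ g ^ 2 * (g ^ (e - 2) * dd ^ (e - 2)) * s ^ 2 := by
        have : 0 ≤ s ^ 2 := by positivity
        have h4 : g ^ 2 * s ^ (e-2) ≤ g ^ 2 * (g ^ (e - 2) * dd ^ (e - 2)) :=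
          mul_le_mul_of_nonneg_left h2 (by positivity)
        exact mul_le_mul_of_nonneg_right h4 this
    _ = dd ^ (e - 2) * g ^ e * s ^ 2 := by rw [← h3]; ring

/-- rpow downshift: `s^e ≤ t^(e-2) s²` when `0<t≤s`, `e≤2`. -/
lemma afbf_downshift {s t e : ℝ} (ht : 0 < t) (hts : t ≤ s) (he : e ≤ 2) :
    s ^ e ≤ t ^ (e - 2) * s ^ 2 := by
  have hs : 0 < s := lt_of_lt_of_le ht hts
  have h1 : s ^ e = s ^ (e - 2) * s ^ 2 := by
    rw [← Real.rpow_natCast s 2, ← Real.rpow_add hs]; norm_num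
  have h2 : s ^ (e - 2) ≤ t ^ (e - 2) :=
    Real.rpow_le_rpow_of_nonpos ht hts (by linarith)
  rw [h1]
  exact mul_le_mul_of_nonneg_right h2 (by positivity)

/-- rpow split: `s^e ≤ s^μ M^(e-μ)` when `0<s≤M`, `μ≤e`. -/
lemma afbf_split {s M e μ : ℝ} (hs : 0 < s) (hle : s ≤ M) (he : μ ≤ e) :
    s ^ e ≤ s ^ μ * M ^ (e - μ) := by
  have h1 : s ^ e = s ^ μ * s ^ (e - μ) := by rw [← Real.rpow_add hs]; ring_nf
  rw [h1]
  exact mul_le_mul_of_nonneg_left (Real.rpow_le_rpow hs.le hle (by linarith)) (by positivity)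
set_option maxHeartbeats 3200000 in
theorem afbf_rate_stepsize_choice_two
    {H : Type*} [NormedAddCommGroup H] [InnerProductSpace ℝ H] [FiniteDimensional ℝ H]
    (A B : H → H) (C : H → Set H)
    (domC : Set H) (hdomC : domC = {x : H | (C x).Nonempty})
    (hdom_ne : domC.Nonempty) (hdom_closed : IsClosed domC) (hdom_conv : Convex ℝ domC)
    -- C is maximally monotone
    (hCmono : ∀ x y : H, ∀ u ∈ C x, ∀ v ∈ C y, 0 ≤ ⟪u - v, x - y⟫)
    (hCmax : ∀ x u : H, (∀ y : H, ∀ v ∈ C y, 0 ≤ ⟪u - v, x - y⟫) → u ∈ C x)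
    -- A is continuous on dom C
    (hAcont : ContinuousOn A domC)
    -- B is L-Lipschitz on dom C
    (L : ℝ) (hL : 0 < L)
    (hB : ∀ x ∈ domC, ∀ y ∈ domC, ‖B x - B y‖ ≤ L * ‖x - y‖)
    -- A + B + C is pseudo-monotone
    (hpseudo : ∀ x y : H,
      (∃ cx ∈ C x, 0 ≤ ⟪A x + B x + cx, y - x⟫) →
      ∀ cy ∈ C y, 0 ≤ ⟪A y + B y + cy, y - x⟫)
    -- metric projection onto dom C
    (projC : H → H)
    (hproj_mem : ∀ w : H, projC w ∈ domC)
    (hproj_dist : ∀ w : H, ∀ y ∈ domC, ‖w - projC w‖ ≤ ‖w - y‖)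
    -- resolvent of γ C : single-valued, defined on all of H
    (J : ℝ → H → H)
    (hJ : ∀ γ : ℝ, 0 < γ → ∀ zz pz : H, J γ zz = pz ↔ zz - pz ∈ γ • C pz)
    -- Assumption 1(v)
    (ζ τ : ℝ) (hζ : 0 < ζ) (hτ : 0 < τ)
    (hres : ∀ (uu w : H) (γ : ℝ), 0 < γ →
      ‖projC w - J γ (projC w - γ • uu)‖ ≤ γ * (ζ * ‖uu‖ + τ))
    -- generalized Lipschitz condition on A with μ ∈ (0,2)
    (μ θ β : ℝ) (hμ0 : 0 < μ) (hμ2 : μ < 2) (hθ : 2 ≤ θ) (hβ : 2 ≤ β)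
    (a b c : H → ℝ)
    (ha_cont : Continuous a) (hb_cont : Continuous b) (hc_cont : Continuous c)
    (ha_nn : ∀ v : H, 0 ≤ a v) (hb_nn : ∀ v : H, 0 ≤ b v) (hc_nn : ∀ v : H, 0 ≤ c v)
    (hA : ∀ z₁ ∈ domC, ∀ z₂ ∈ domC,
      ‖A z₁ - A z₂‖ ^ 2 ≤
        a z₁ * ‖z₁ - z₂‖ ^ μ + b z₁ * ‖z₁ - z₂‖ ^ θ + c z₁ * ‖z₁ - z₂‖ ^ β)
    -- d(x) = ζ‖Ax + Bx‖ + τ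
    (d : H → ℝ) (hd : ∀ v : H, d v = ζ * ‖A v + B v‖ + τ)
    -- Stepsize Choice 2
    (ε : ℝ) (hε0 : 0 < ε) (hε1 : ε < 1)
    (αmin αmax σ : ℝ) (hαmin : 0 < αmin) (hα_le : αmin ≤ αmax) (hαmax : αmax < 1)
    (hσ : 0 < σ)
    (α : ℕ → ℝ) (hα : ∀ k : ℕ, α k ∈ Set.Icc αmin αmax)
    (x z p qq xhat u : ℕ → H) (γ γbar γbar₁ γbar₂ : ℕ → ℝ)
    (hγbar₁_pos : ∀ k : ℕ, 0 < γbar₁ k)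
    (hγbar₁_eq : ∀ k : ℕ,
      L ^ 2 * γbar₁ k ^ 2
        + b (x k) * d (x k) ^ (θ - 2) * γbar₁ k ^ θ
        + c (x k) * d (x k) ^ (β - 2) * γbar₁ k ^ β
        + 2 ^ (2 - μ) * a (x k) * γbar₁ k ^ μ * ε ^ (μ - 2) = α k / 2)
    (hγbar₂_pos : ∀ k : ℕ, 0 < γbar₂ k)
    (hγbar₂_eq : ∀ k : ℕ,
      L ^ 2 * d (x k) ^ (2 - μ) * γbar₂ k ^ 2
        + b (x k) * d (x k) ^ (θ - μ) * γbar₂ k ^ θ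
        + c (x k) * d (x k) ^ (β - μ) * γbar₂ k ^ β
        + a (x k) * γbar₂ k ^ μ = ε ^ (2 - μ) * α k / 2 ^ (3 - μ))
    (hγbar : ∀ k : ℕ, γbar k = min (γbar₁ k) (γbar₂ k))
    (hγ_le : ∀ k : ℕ, σ ≤ γbar k → σ ≤ γ k ∧ γ k ≤ γbar k)
    (hγ_eq : ∀ k : ℕ, γbar k < σ → γ k = γbar k)
    -- AFBF iterations
    (hx0 : x 0 ∈ domC)
    (hz : ∀ k : ℕ, z k = x k - γ k • (A (x k) + B (x k)))
    (hp : ∀ k : ℕ, p k = J (γ k) (z k))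
    (hq : ∀ k : ℕ, qq k = p k - γ k • (A (p k) + B (p k)))
    (hxhat : ∀ k : ℕ, xhat k = qq k - z k + x k)
    (hx_succ : ∀ k : ℕ, x (k + 1) = projC (xhat k))
    (hu : ∀ k : ℕ, u k =
      (γ k)⁻¹ • (x k - p k) + A (p k) + B (p k) - A (x k) - B (x k))
    -- zer(A+B+C) ≠ ∅ and z̄ ∈ zer(A+B+C)
    (hzer : ∃ zb : H, ∃ c0 ∈ C zb, A zb + B zb + c0 = 0)
    (zbar : H) (hzbar : ∃ c0 ∈ C zbar, A zbar + B zbar + c0 = 0)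
    -- lower bound on the stepsizes
    (γmin : ℝ) (hγmin : 0 < γmin) (hγ_lb : ∀ k : ℕ, γmin ≤ γ k) :
    ∀ K : ℕ, 0 < K →
      1 / ε ^ 2 * ((1 + Real.sqrt αmax) ^ 2 / (γmin ^ 2 * (1 - αmax))) * ‖x 0 - zbar‖ ^ 2
        ≤ (K : ℝ) →
      ∃ k : ℕ, k < K ∧ ‖u k‖ ≤ ε := by

  intro K hK0 hKbound
  by_contra hcon
  push_neg at hcon
  -- hcon : ∀ k < K, ε < ‖u k‖
  obtain ⟨c0, hc0, hc0eq⟩ := hzbar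
  have hzbar_mem : zbar ∈ domC := by rw [hdomC]; exact ⟨c0, hc0⟩
  have hγpos : ∀ k, 0 < γ k := fun k => lt_of_lt_of_le hγmin (hγ_lb k)
  have hdpos : ∀ v : H, 0 < d v := by intro v; rw [hd]; positivity
  have hγ_le_bar : ∀ k, γ k ≤ γbar k := by
    intro k
    rcases le_or_gt σ (γbar k) with h | h
    · exact (hγ_le k h).2
    · exact (hγ_eq k h).le
  have hγ1 : ∀ k, γ k ≤ γbar₁ k := fun k =>
    (hγ_le_bar k).trans ((hγbar k).le.trans (min_le_left _ _))
  have hγ2 : ∀ k, γ k ≤ γbar₂ k := fun k =>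
    (hγ_le_bar k).trans ((hγbar k).le.trans (min_le_right _ _))
  have hαk0 : ∀ k, 0 < α k := fun k => lt_of_lt_of_le hαmin (hα k).1
  have hαk1 : ∀ k, α k ≤ αmax := fun k => (hα k).2
  -- projection facts
  haveI : Nonempty domC := hdom_ne.to_subtype
  have hproj_eq : ∀ y ∈ domC, projC y = y := by
    intro y hy
    have h := hproj_dist y y hy
    simp only [sub_self, norm_zero] at h
    have h2 : y - projC y = 0 := norm_le_zero_iff.mp h
    have := sub_eq_zero.mp h2
    exact this.symm
  have hproj_inner : ∀ w : H, ∀ y ∈ domC, ⟪w - projC w, y - projC w⟫ ≤ 0 := by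
    intro w y hy
    have hmin : ‖w - projC w‖ = ⨅ v : domC, ‖w - v‖ := by
      apply le_antisymm
      · exact le_ciInf fun v => hproj_dist w v v.2
      · have hbdd : BddBelow (Set.range fun v : domC => ‖w - (v : H)‖) :=
          ⟨0, by rintro _ ⟨v, rfl⟩; exact norm_nonneg _⟩
        exact ciInf_le hbdd ⟨projC w, hproj_mem w⟩
    exact (norm_eq_iInf_iff_real_inner_le_zero hdom_conv (hproj_mem w)).mp hmin y hy
  have hproj_contract : ∀ w : H, ∀ y ∈ domC, ‖projC w - y‖ ≤ ‖w - y‖ := by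
    intro w y hy
    have h1 := hproj_inner w y hy
    have h2 := norm_add_sq_real (w - projC w) (projC w - y)
    rw [sub_add_sub_cancel] at h2
    have h3 : ⟪w - projC w, projC w - y⟫ = - ⟪w - projC w, y - projC w⟫ := by
      rw [← inner_neg_right, neg_sub]
    nlinarith [norm_nonneg (w - projC w), norm_nonneg (projC w - y), norm_nonneg (w - y)]
  have hx_mem : ∀ k, x k ∈ domC := by
    intro k
    induction k with
    | zero => exact hx0
    | succ n ih => rw [hx_succ n]; exact hproj_mem _
  have hcp : ∀ k, (γ k)⁻¹ • (z k - p k) ∈ C (p k) := by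
    intro k
    have h := (hJ (γ k) (hγpos k) (z k) (p k)).mp (hp k).symm
    rw [Set.mem_smul_set] at h
    obtain ⟨v, hv, hvv⟩ := h
    rw [← hvv, smul_smul, inv_mul_cancel₀ (hγpos k).ne', one_smul]
    exact hv
  have hp_mem : ∀ k, p k ∈ domC := fun k => by rw [hdomC]; exact ⟨_, hcp k⟩
  have hu_op : ∀ k, u k = A (p k) + B (p k) + (γ k)⁻¹ • (z k - p k) := by
    intro k
    rw [hu k, hz k]
    simp only [smul_sub, smul_smul, inv_mul_cancel₀ (hγpos k).ne', one_smul]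
    abel
  have hkey : ∀ k, 0 ≤ ⟪u k, p k - zbar⟫ := by
    intro k
    have h := hpseudo zbar (p k) ⟨c0, hc0, by rw [hc0eq]; simp⟩
      ((γ k)⁻¹ • (z k - p k)) (hcp k)
    rwa [← hu_op k] at h
  have hs_le : ∀ k, ‖x k - p k‖ ≤ γ k * d (x k) := by
    intro k
    have h := hres (A (x k) + B (x k)) (x k) (γ k) (hγpos k)
    rw [hproj_eq (x k) (hx_mem k), ← hz k, ← hp k, ← hd (x k)] at h
    exact h
  -- shorthand for the "e" vector
  set E : ℕ → H := fun k => A (p k) + B (p k) - A (x k) - B (x k) with hE_def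
  have hu_split : ∀ k, u k = (γ k)⁻¹ • (x k - p k) + E k := by
    intro k; rw [hu k]; simp only [hE_def]; abel
  have hgu : ∀ k, γ k • u k = (x k - p k) + γ k • E k := by
    intro k
    rw [hu_split k, smul_add, smul_smul, mul_inv_cancel₀ (hγpos k).ne', one_smul]
  have hxhat_eq : ∀ k, xhat k - zbar = (p k - zbar) - γ k • E k := by
    intro k
    rw [hxhat k, hq k, hz k]
    simp only [hE_def, smul_sub, smul_add]
    abel
  -- descent inequality
  have hdescent : ∀ k, ‖x (k+1) - zbar‖ ^ 2 ≤
      ‖x k - zbar‖ ^ 2 - ‖x k - p k‖ ^ 2 + (γ k)^2 * ‖E k‖ ^ 2 := by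
    intro k
    have h1 : ‖x (k+1) - zbar‖ ≤ ‖xhat k - zbar‖ := by
      rw [hx_succ k]; exact hproj_contract _ _ hzbar_mem
    have h2 : ‖x (k+1) - zbar‖ ^ 2 ≤ ‖xhat k - zbar‖ ^ 2 :=
      pow_le_pow_left₀ (norm_nonneg _) h1 2
    have h3 := afbf_inner_aux (x k - zbar) (p k - zbar) (γ k • E k)
    have h4 : (x k - zbar) - (p k - zbar) = x k - p k := by abel
    rw [h4, ← hgu k] at h3
    rw [← hxhat_eq k] at h3
    have h5 : ⟪γ k • u k, p k - zbar⟫ = γ k * ⟪u k, p k - zbar⟫ := real_inner_smul_left _ _ _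
    have h6 : 0 ≤ ⟪γ k • u k, p k - zbar⟫ := by
      rw [h5]; exact mul_nonneg (hγpos k).le (hkey k)
    have h7 : ‖γ k • E k‖ ^ 2 = (γ k)^2 * ‖E k‖ ^ 2 := by
      rw [norm_smul, Real.norm_eq_abs, mul_pow, sq_abs]
    linarith [h2, h3, h6, h7]
  -- bound on ‖E k‖²
  have hE_sq : ∀ k, ‖E k‖ ^ 2 ≤
      2 * (a (x k) * ‖x k - p k‖ ^ μ + b (x k) * ‖x k - p k‖ ^ θ
            + c (x k) * ‖x k - p k‖ ^ β) + 2 * (L ^ 2 * ‖x k - p k‖ ^ 2) := by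
    intro k
    have h1 : ‖E k‖ ≤ ‖A (x k) - A (p k)‖ + ‖B (x k) - B (p k)‖ := by
      have he : E k = -((A (x k) - A (p k)) + (B (x k) - B (p k))) := by
        simp only [hE_def]; abel
      rw [he, norm_neg]; exact norm_add_le _ _
    have h2 := hA (x k) (hx_mem k) (p k) (hp_mem k)
    have h3 := hB (x k) (hx_mem k) (p k) (hp_mem k)
    have h1sq : ‖E k‖ ^ 2 ≤ (‖A (x k) - A (p k)‖ + ‖B (x k) - B (p k)‖) ^ 2 :=
      pow_le_pow_left₀ (norm_nonneg _) h1 2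
    have h3sq : ‖B (x k) - B (p k)‖ ^ 2 ≤ (L * ‖x k - p k‖) ^ 2 :=
      pow_le_pow_left₀ (norm_nonneg _) h3 2
    rw [mul_pow] at h3sq
    have hexp : (‖A (x k) - A (p k)‖ + ‖B (x k) - B (p k)‖) ^ 2
        ≤ 2 * ‖A (x k) - A (p k)‖ ^ 2 + 2 * ‖B (x k) - B (p k)‖ ^ 2 := by
      nlinarith [sq_nonneg (‖A (x k) - A (p k)‖ - ‖B (x k) - B (p k)‖)]
    linarith
  -- Case 1 bound : γ²‖E‖² ≤ α s²
  have hcase1 : ∀ k, ε * γ k / 2 ≤ ‖x k - p k‖ →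
      (γ k)^2 * ‖E k‖ ^ 2 ≤ α k * ‖x k - p k‖ ^ 2 := by
    intro k hks
    have hg := hγpos k
    have hdd := hdpos (x k)
    have hs_pos : 0 < ‖x k - p k‖ := lt_of_lt_of_le (by positivity) hks
    have hsle := hs_le k
    have tθ := afbf_upshift hs_pos hg hdd hsle hθ
    have tβ := afbf_upshift hs_pos hg hdd hsle hβ
    have tμ0 := afbf_downshift (show 0 < ε * γ k / 2 by positivity) hks hμ2.le
    have hγ2μ : γ k ^ 2 * γ k ^ (μ - 2) = γ k ^ μ := by
      rw [← Real.rpow_natCast (γ k) 2, ← Real.rpow_add hg]; norm_num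
    have hsplit : (ε * γ k / 2) ^ (μ - 2) = ε ^ (μ - 2) * γ k ^ (μ - 2) * 2 ^ (2 - μ) := by
      rw [div_eq_mul_inv, Real.mul_rpow (by positivity) (by positivity),
        Real.mul_rpow hε0.le hg.le, Real.inv_rpow (by norm_num : (0:ℝ) ≤ 2),
        ← Real.rpow_neg (by norm_num : (0:ℝ) ≤ 2), neg_sub]
    have hid : γ k ^ 2 * (ε * γ k / 2) ^ (μ - 2) = 2 ^ (2 - μ) * γ k ^ μ * ε ^ (μ - 2) := by
      rw [hsplit]
      linear_combination ε ^ (μ - 2) * 2 ^ (2 - μ) * hγ2μ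
    have tμ : γ k ^ 2 * ‖x k - p k‖ ^ μ
        ≤ (2 ^ (2 - μ) * γ k ^ μ * ε ^ (μ - 2)) * ‖x k - p k‖ ^ 2 := by
      calc γ k ^ 2 * ‖x k - p k‖ ^ μ
          ≤ γ k ^ 2 * ((ε * γ k / 2) ^ (μ - 2) * ‖x k - p k‖ ^ 2) :=
            mul_le_mul_of_nonneg_left tμ0 (by positivity)
        _ = (γ k ^ 2 * (ε * γ k / 2) ^ (μ - 2)) * ‖x k - p k‖ ^ 2 := by ring
        _ = _ := by rw [hid]
    have hmono1 : L ^ 2 * γ k ^ 2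
        + b (x k) * d (x k) ^ (θ - 2) * γ k ^ θ
        + c (x k) * d (x k) ^ (β - 2) * γ k ^ β
        + 2 ^ (2 - μ) * a (x k) * γ k ^ μ * ε ^ (μ - 2) ≤ α k / 2 := by
      rw [← hγbar₁_eq k]
      have e1 : γ k ^ 2 ≤ γbar₁ k ^ 2 := pow_le_pow_left₀ hg.le (hγ1 k) 2
      have e2 : γ k ^ θ ≤ γbar₁ k ^ θ := Real.rpow_le_rpow hg.le (hγ1 k) (by linarith)
      have e3 : γ k ^ β ≤ γbar₁ k ^ β := Real.rpow_le_rpow hg.le (hγ1 k) (by linarith)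
      have e4 : γ k ^ μ ≤ γbar₁ k ^ μ := Real.rpow_le_rpow hg.le (hγ1 k) hμ0.le
      have n1 : (0:ℝ) ≤ L ^ 2 := sq_nonneg L
      have n2 : (0:ℝ) ≤ b (x k) * d (x k) ^ (θ - 2) :=
        mul_nonneg (hb_nn _) (Real.rpow_nonneg hdd.le _)
      have n3 : (0:ℝ) ≤ c (x k) * d (x k) ^ (β - 2) :=
        mul_nonneg (hc_nn _) (Real.rpow_nonneg hdd.le _)
      have n4 : (0:ℝ) ≤ 2 ^ (2 - μ) * a (x k) * ε ^ (μ - 2) :=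
        mul_nonneg (mul_nonneg (Real.rpow_nonneg (by norm_num) _) (ha_nn _))
          (Real.rpow_nonneg hε0.le _)
      have m1 := mul_le_mul_of_nonneg_left e1 n1
      have m2 := mul_le_mul_of_nonneg_left e2 n2
      have m3 := mul_le_mul_of_nonneg_left e3 n3
      have m4 := mul_le_mul_of_nonneg_left e4 n4
      linarith
    have h0 := mul_le_mul_of_nonneg_left (hE_sq k) (show (0:ℝ) ≤ γ k ^ 2 by positivity)
    have ha' := mul_le_mul_of_nonneg_left tμ
      (show (0:ℝ) ≤ 2 * a (x k) by linarith [ha_nn (x k)])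
    have hb' := mul_le_mul_of_nonneg_left tθ
      (show (0:ℝ) ≤ 2 * b (x k) by linarith [hb_nn (x k)])
    have hc' := mul_le_mul_of_nonneg_left tβ
      (show (0:ℝ) ≤ 2 * c (x k) by linarith [hc_nn (x k)])
    have hmono' := mul_le_mul_of_nonneg_left hmono1
      (show (0:ℝ) ≤ 2 * ‖x k - p k‖ ^ 2 by positivity)
    linarith [h0, ha', hb', hc', hmono']
  -- Case 2 bound : small residual implies ‖u k‖ ≤ ε
  have hcase2 : ∀ k, ‖x k - p k‖ < ε * γ k / 2 → ‖u k‖ ≤ ε := by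
    intro k hks
    rcases (norm_nonneg (x k - p k)).eq_or_lt with h0 | hs_pos
    · have hxp : x k = p k := sub_eq_zero.mp (norm_eq_zero.mp h0.symm)
      have hu0 : u k = 0 := by rw [hu k, hxp]; simp
      rw [hu0, norm_zero]; exact hε0.le
    · have hg := hγpos k
      have hdd := hdpos (x k)
      have hsle := hs_le k
      have hsle2 : ‖x k - p k‖ ≤ ε * γ k / 2 := hks.le
      have c2 : ‖x k - p k‖ ^ 2 ≤ ‖x k - p k‖ ^ μ * (γ k * d (x k)) ^ ((2:ℝ) - μ) := by
        have h := afbf_split (μ := μ) (e := (2:ℝ)) hs_pos hsle (by linarith)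
        rwa [Real.rpow_two] at h
      have cθ := afbf_split (μ := μ) (e := θ) hs_pos hsle (by linarith)
      have cβ := afbf_split (μ := μ) (e := β) hs_pos hsle (by linarith)
      have cμ : ‖x k - p k‖ ^ μ ≤ (ε * γ k / 2) ^ μ :=
        Real.rpow_le_rpow hs_pos.le hsle2 hμ0.le
      have hsplitμ : (ε * γ k / 2) ^ μ = ε ^ μ * γ k ^ μ / 2 ^ μ := by
        rw [div_eq_mul_inv, Real.mul_rpow (by positivity) (by positivity),
          Real.mul_rpow hε0.le hg.le, Real.inv_rpow (by norm_num : (0:ℝ) ≤ 2)]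
        ring
      have hmulr : ∀ e : ℝ, (γ k * d (x k)) ^ e = γ k ^ e * d (x k) ^ e :=
        fun e => Real.mul_rpow hg.le hdd.le
      have hγadd : ∀ e1 e2 : ℝ, γ k ^ e1 * γ k ^ e2 = γ k ^ (e1 + e2) :=
        fun e1 e2 => (Real.rpow_add hg _ _).symm
      have hγtwo : γ k ^ ((2:ℝ)) = γ k ^ 2 := Real.rpow_two _
      -- per-term bounds
      have hFpos : (0:ℝ) < 2 * ε ^ μ / 2 ^ μ := by
        have := Real.rpow_pos_of_pos hε0 μ
        have := Real.rpow_pos_of_pos (show (0:ℝ) < 2 by norm_num) μ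
        positivity
      have key : ∀ e : ℝ, 2 ≤ e →
          2 * ‖x k - p k‖ ^ e ≤ (2 * ε ^ μ / 2 ^ μ) * (d (x k) ^ (e - μ) * γ k ^ e) := by
        intro e he
        have ce := afbf_split (μ := μ) (e := e) hs_pos hsle (by linarith)
        have h1 : ‖x k - p k‖ ^ e ≤ (ε * γ k / 2) ^ μ * (γ k * d (x k)) ^ (e - μ) :=
          le_trans ce (mul_le_mul_of_nonneg_right cμ (Real.rpow_nonneg (by positivity) _))
        have hadd : μ + (e - μ) = e := by ring
        have h2 : (ε * γ k / 2) ^ μ * (γ k * d (x k)) ^ (e - μ)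
            = (ε ^ μ / 2 ^ μ) * (d (x k) ^ (e - μ) * γ k ^ e) := by
          rw [hsplitμ, hmulr (e - μ)]
          have h3 := hγadd μ (e - μ)
          rw [hadd] at h3
          linear_combination (ε ^ μ / 2 ^ μ * d (x k) ^ (e - μ)) * h3
        calc 2 * ‖x k - p k‖ ^ e ≤ 2 * ((ε ^ μ / 2 ^ μ) * (d (x k) ^ (e - μ) * γ k ^ e)) := by
              rw [← h2]; linarith
          _ = (2 * ε ^ μ / 2 ^ μ) * (d (x k) ^ (e - μ) * γ k ^ e) := by ring
      have Tθ := key θ hθ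
      have Tβ := key β hβ
      have TL : 2 * ‖x k - p k‖ ^ 2
          ≤ (2 * ε ^ μ / 2 ^ μ) * (d (x k) ^ ((2:ℝ) - μ) * γ k ^ 2) := by
        have h := key 2 le_rfl
        rw [show ((2:ℝ)) = ((2:ℕ):ℝ) by norm_num] at h
        rw [Real.rpow_natCast] at h
        convert h using 4 <;> norm_num
      have Tμ : 2 * ‖x k - p k‖ ^ μ ≤ (2 * ε ^ μ / 2 ^ μ) * γ k ^ μ := by
        have h1 : ‖x k - p k‖ ^ μ ≤ ε ^ μ * γ k ^ μ / 2 ^ μ := by rw [← hsplitμ]; exact cμ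
        calc 2 * ‖x k - p k‖ ^ μ ≤ 2 * (ε ^ μ * γ k ^ μ / 2 ^ μ) := by linarith
          _ = (2 * ε ^ μ / 2 ^ μ) * γ k ^ μ := by ring
      -- monotone polynomial bound at γbar₂
      have hmono2 : L ^ 2 * d (x k) ^ ((2:ℝ) - μ) * γ k ^ 2
          + b (x k) * d (x k) ^ (θ - μ) * γ k ^ θ
          + c (x k) * d (x k) ^ (β - μ) * γ k ^ β
          + a (x k) * γ k ^ μ ≤ ε ^ (2 - μ) * α k / 2 ^ (3 - μ) := by
        rw [← hγbar₂_eq k]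
        have e1 : γ k ^ 2 ≤ γbar₂ k ^ 2 := pow_le_pow_left₀ hg.le (hγ2 k) 2
        have e2 : γ k ^ θ ≤ γbar₂ k ^ θ := Real.rpow_le_rpow hg.le (hγ2 k) (by linarith)
        have e3 : γ k ^ β ≤ γbar₂ k ^ β := Real.rpow_le_rpow hg.le (hγ2 k) (by linarith)
        have e4 : γ k ^ μ ≤ γbar₂ k ^ μ := Real.rpow_le_rpow hg.le (hγ2 k) hμ0.le
        have n1 : (0:ℝ) ≤ L ^ 2 * d (x k) ^ ((2:ℝ) - μ) :=
          mul_nonneg (sq_nonneg L) (Real.rpow_nonneg hdd.le _)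
        have n2 : (0:ℝ) ≤ b (x k) * d (x k) ^ (θ - μ) :=
          mul_nonneg (hb_nn _) (Real.rpow_nonneg hdd.le _)
        have n3 : (0:ℝ) ≤ c (x k) * d (x k) ^ (β - μ) :=
          mul_nonneg (hc_nn _) (Real.rpow_nonneg hdd.le _)
        have m1 := mul_le_mul_of_nonneg_left e1 n1
        have m2 := mul_le_mul_of_nonneg_left e2 n2
        have m3 := mul_le_mul_of_nonneg_left e3 n3
        have m4 := mul_le_mul_of_nonneg_left e4 (ha_nn (x k))
        linarith
      have hmono2' := mul_le_mul_of_nonneg_left hmono2 hFpos.le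
      -- scalar identity
      have hε2 : ε ^ μ * ε ^ (2 - μ) = ε ^ 2 := by
        rw [← Real.rpow_natCast ε 2, ← Real.rpow_add hε0]; norm_num
      have h2pow : (2:ℝ) ^ μ * 2 ^ (3 - μ) = 8 := by
        rw [← Real.rpow_add (by norm_num : (0:ℝ) < 2)]
        rw [show μ + (3 - μ) = ((3:ℕ):ℝ) by push_cast; ring, Real.rpow_natCast]
        norm_num
      have hscal : (2 * ε ^ μ / 2 ^ μ) * (ε ^ (2 - μ) * α k / 2 ^ (3 - μ))
          = ε ^ 2 * α k / 4 := by
        have hne1 : (2:ℝ) ^ μ ≠ 0 :=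
          (Real.rpow_pos_of_pos (by norm_num) μ).ne'
        have hne2 : (2:ℝ) ^ (3 - μ) ≠ 0 :=
          (Real.rpow_pos_of_pos (by norm_num) (3 - μ)).ne'
        calc (2 * ε ^ μ / 2 ^ μ) * (ε ^ (2 - μ) * α k / 2 ^ (3 - μ))
            = 2 * (ε ^ μ * ε ^ (2 - μ)) * α k / (2 ^ μ * 2 ^ (3 - μ)) := by ring
          _ = 2 * ε ^ 2 * α k / 8 := by rw [hε2, h2pow]
          _ = ε ^ 2 * α k / 4 := by ring
      -- the bound on ‖E k‖²
      have hmul_a := mul_le_mul_of_nonneg_left Tμ (ha_nn (x k))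
      have hmul_b := mul_le_mul_of_nonneg_left Tθ (hb_nn (x k))
      have hmul_c := mul_le_mul_of_nonneg_left Tβ (hc_nn (x k))
      have hmul_L := mul_le_mul_of_nonneg_left TL (sq_nonneg L)
      have hEfin : ‖E k‖ ^ 2 ≤ ε ^ 2 * α k / 4 := by
        have h := hE_sq k
        linarith [hmul_a, hmul_b, hmul_c, hmul_L, hmono2', hscal]
      have hEle : ‖E k‖ ≤ ε / 2 := by
        apply sq_le_of_nonneg (norm_nonneg _) (by positivity)
        have hα1 : α k ≤ 1 := le_of_lt (lt_of_le_of_lt (hαk1 k) hαmax)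
        have := mul_nonneg (sq_nonneg ε) (show (0:ℝ) ≤ 1 - α k by linarith)
        linarith [hEfin]
      have hinv : (γ k)⁻¹ * ‖x k - p k‖ < ε / 2 := by
        have h1 := mul_lt_mul_of_pos_left hks (inv_pos.mpr hg)
        have h2 : (γ k)⁻¹ * (ε * γ k / 2) = ε / 2 := by field_simp
        rwa [h2] at h1
      have hub : ‖u k‖ ≤ (γ k)⁻¹ * ‖x k - p k‖ + ‖E k‖ := by
        rw [hu_split k]
        calc ‖(γ k)⁻¹ • (x k - p k) + E k‖
            ≤ ‖(γ k)⁻¹ • (x k - p k)‖ + ‖E k‖ := norm_add_le _ _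
          _ = (γ k)⁻¹ * ‖x k - p k‖ + ‖E k‖ := by
              rw [norm_smul, Real.norm_eq_abs, abs_of_pos (inv_pos.mpr hg)]
      linarith
  -- every k < K falls into case 1
  have hc1 : ∀ k, k < K → ε * γ k / 2 ≤ ‖x k - p k‖ := by
    intro k hk
    by_contra h
    push_neg at h
    exact absurd (hcase2 k h) (not_le.mpr (hcon k hk))
  -- per-step decrease
  have hdesc : ∀ k, k < K →
      ‖x (k+1) - zbar‖ ^ 2 + (1 - αmax) * ‖x k - p k‖ ^ 2 ≤ ‖x k - zbar‖ ^ 2 := by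
    intro k hk
    have h1 := hdescent k
    have h2 := hcase1 k (hc1 k hk)
    have h3 : (1 - αmax) * ‖x k - p k‖ ^ 2 ≤ (1 - α k) * ‖x k - p k‖ ^ 2 := by
      have := hαk1 k
      nlinarith [sq_nonneg ‖x k - p k‖]
    linarith
  -- summation
  have hsum : ∀ n, n ≤ K →
      ‖x n - zbar‖ ^ 2 + (1 - αmax) * ∑ k ∈ Finset.range n, ‖x k - p k‖ ^ 2
        ≤ ‖x 0 - zbar‖ ^ 2 := by
    intro n
    induction n with
    | zero => simp
    | succ m ih =>
      intro hmK
      have hm : m < K := Nat.lt_of_succ_le hmK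
      have h1 := ih hm.le
      have h2 := hdesc m hm
      rw [Finset.sum_range_succ]
      ring_nf
      ring_nf at h1 h2
      linarith
  -- lower bound per step
  have hlow : ∀ k, k < K →
      ε ^ 2 * γmin ^ 2 < (1 + Real.sqrt αmax) ^ 2 * ‖x k - p k‖ ^ 2 := by
    intro k hk
    -- ‖u k‖ * γ k ≤ (1 + √(α k)) * s k
    have hsα : 0 ≤ Real.sqrt (α k) := Real.sqrt_nonneg _
    have hEb : γ k * ‖E k‖ ≤ Real.sqrt (α k) * ‖x k - p k‖ := by
      apply sq_le_of_nonneg (mul_nonneg (hγpos k).le (norm_nonneg _)) (by positivity)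
      have : (Real.sqrt (α k) * ‖x k - p k‖) ^ 2 = α k * ‖x k - p k‖ ^ 2 := by
        rw [mul_pow, Real.sq_sqrt (hαk0 k).le]
      rw [this, mul_pow]
      exact hcase1 k (hc1 k hk)
    have hub : ‖u k‖ ≤ (γ k)⁻¹ * ‖x k - p k‖ + ‖E k‖ := by
      rw [hu_split k]
      calc ‖(γ k)⁻¹ • (x k - p k) + E k‖ ≤ ‖(γ k)⁻¹ • (x k - p k)‖ + ‖E k‖ := norm_add_le _ _
        _ = (γ k)⁻¹ * ‖x k - p k‖ + ‖E k‖ := by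
            rw [norm_smul, Real.norm_eq_abs, abs_of_pos (inv_pos.mpr (hγpos k))]
    have hub2 : γ k * ‖u k‖ ≤ (1 + Real.sqrt αmax) * ‖x k - p k‖ := by
      have h1 : γ k * ‖u k‖ ≤ ‖x k - p k‖ + γ k * ‖E k‖ := by
        have := mul_le_mul_of_nonneg_left hub (hγpos k).le
        rw [mul_add, ← mul_assoc, mul_inv_cancel₀ (hγpos k).ne', one_mul] at this
        exact this
      have h2 : Real.sqrt (α k) ≤ Real.sqrt αmax := Real.sqrt_le_sqrt (hαk1 k)
      have h3 : Real.sqrt (α k) * ‖x k - p k‖ ≤ Real.sqrt αmax * ‖x k - p k‖ :=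
        mul_le_mul_of_nonneg_right h2 (norm_nonneg _)
      linarith [hEb]
    have h4 : ε * γmin < γ k * ‖u k‖ := by
      calc ε * γmin ≤ ε * γ k := mul_le_mul_of_nonneg_left (hγ_lb k) hε0.le
        _ < ‖u k‖ * γ k := mul_lt_mul_of_pos_right (hcon k hk) (hγpos k)
        _ = γ k * ‖u k‖ := mul_comm _ _
    have h5 : ε * γmin < (1 + Real.sqrt αmax) * ‖x k - p k‖ := lt_of_lt_of_le h4 hub2
    have h6 : (ε * γmin) ^ 2 < ((1 + Real.sqrt αmax) * ‖x k - p k‖) ^ 2 :=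
      pow_lt_pow_left₀ h5 (by positivity) two_ne_zero
    calc ε ^ 2 * γmin ^ 2 = (ε * γmin) ^ 2 := by ring
      _ < ((1 + Real.sqrt αmax) * ‖x k - p k‖) ^ 2 := h6
      _ = (1 + Real.sqrt αmax) ^ 2 * ‖x k - p k‖ ^ 2 := by ring
  -- final contradiction
  set S := ∑ k ∈ Finset.range K, ‖x k - p k‖ ^ 2 with hS_def
  have hF1 : (K : ℝ) * (ε ^ 2 * γmin ^ 2) < (1 + Real.sqrt αmax) ^ 2 * S := by
    have hne : (Finset.range K).Nonempty := Finset.nonempty_range_iff.mpr hK0.ne'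
    have := Finset.sum_lt_sum_of_nonempty hne
      (f := fun _ => ε ^ 2 * γmin ^ 2)
      (g := fun k => (1 + Real.sqrt αmax) ^ 2 * ‖x k - p k‖ ^ 2)
      (fun k hk => hlow k (Finset.mem_range.mp hk))
    rw [Finset.sum_const, Finset.card_range, nsmul_eq_mul, ← Finset.mul_sum] at this
    exact this
  have hF2 : (1 - αmax) * S ≤ ‖x 0 - zbar‖ ^ 2 := by
    have h := hsum K le_rfl
    linarith [sq_nonneg ‖x K - zbar‖]
  have hF3 : (1 + Real.sqrt αmax) ^ 2 * ‖x 0 - zbar‖ ^ 2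
      ≤ (K : ℝ) * (ε ^ 2 * (γmin ^ 2 * (1 - αmax))) := by
    have hpos : 0 < ε ^ 2 * (γmin ^ 2 * (1 - αmax)) := by
      have : 0 < 1 - αmax := by linarith
      positivity
    have heq : (1 + Real.sqrt αmax) ^ 2 * ‖x 0 - zbar‖ ^ 2 =
        (1 / ε ^ 2 * ((1 + Real.sqrt αmax) ^ 2 / (γmin ^ 2 * (1 - αmax))) * ‖x 0 - zbar‖ ^ 2)
          * (ε ^ 2 * (γmin ^ 2 * (1 - αmax))) := by
      have hne1 : (1:ℝ) - αmax ≠ 0 := (by linarith : (0:ℝ) < 1 - αmax).ne'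
      field_simp
    rw [heq]
    exact mul_le_mul_of_nonneg_right hKbound hpos.le
  have hone : (0:ℝ) < 1 - αmax := by linarith
  have hR : (0:ℝ) ≤ (1 + Real.sqrt αmax) ^ 2 := by positivity
  linarith [mul_lt_mul_of_pos_right hF1 hone, mul_le_mul_of_nonneg_left hF2 hR, hF3]
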